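/- The noise-variance reduction from baseline subtraction satisfies the closed form: ΔVar = σ²∑_i a_i²E_i² - [∑_i a_i²Var[δ_i] + ∑_{i≠j} a_i a_j Cov[δ_i,δ_j]] = (σ²/s)(∑_i a_i)(∑_j a_j[2E_j² - \overline{E²}]), where \overline{E²} = (1/s)∑_k E_k². -/

import Mathlib

open MeasureTheory ProbabilityTheory Finset

lemma variance_const_add' {Ω : Type*} [MeasurableSpace Ω] (μ : Measure Ω)
    [IsProbabilityMeasure μ] (C : ℝ) (X : Ω → ℝ) (hX : MemLp X 2 μ) :
    variance (fun ω => C + X ω) μ = variance X μ := by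
  have h1 : MemLp (fun ω => C + X ω) 2 μ := (memLp_const C).add hX
  rw [variance_eq_integral h1.1.aemeasurable, variance_eq_integral hX.1.aemeasurable]
  have hint : ∫ ω, (C + X ω) ∂μ = C + ∫ ω, X ω ∂μ := by
    rw [integral_add (integrable_const C) (hX.integrable one_le_two)]
    simp
  congr 1
  funext ω
  show (C + X ω - ∫ ω, (C + X ω) ∂μ) ^ 2 = (X ω - ∫ ω, X ω ∂μ) ^ 2
  rw [hint]
  ring

lemma variance_linear_comb {Ω : Type*} [MeasurableSpace Ω] (μ : Measure Ω)
    [IsProbabilityMeasure μ] (s : ℕ) (c : Fin s → ℝ) (σ : ℝ) (η : Fin s → Ω → ℝ)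
    (hindep : iIndepFun η μ)
    (hL2 : ∀ i, MemLp (η i) 2 μ)
    (hvar : ∀ i, variance (η i) μ = σ ^ 2) :
    variance (fun ω => ∑ i, c i * η i ω) μ = σ ^ 2 * ∑ i, (c i) ^ 2 := by
  have h1 : (fun ω => ∑ i, c i * η i ω) = ∑ i, (fun ω => c i * η i ω) := by
    funext ω; simp
  rw [h1, IndepFun.variance_sum]
  · simp only [variance_const_mul, hvar]
    rw [Finset.mul_sum]
    exact Finset.sum_congr rfl fun i _ => by ring
  · exact fun i _ => (hL2 i).const_mul _
  · intro i _ j _ hij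
    exact ((hindep.indepFun hij).comp (measurable_const_mul (c i))
      (measurable_const_mul (c j)))

lemma memLp_lin_comb {Ω : Type*} [MeasurableSpace Ω] (μ : Measure Ω)
    [IsProbabilityMeasure μ] (s : ℕ) (c : Fin s → ℝ) (η : Fin s → Ω → ℝ)
    (hL2 : ∀ i, MemLp (η i) 2 μ) :
    MemLp (fun ω => ∑ i, c i * η i ω) 2 μ := by
  have h := memLp_finset_sum' (μ := μ) (p := 2) Finset.univ
    (f := fun i ω => c i * η i ω) (fun i _ => (hL2 i).const_mul (c i))
  have he : (∑ i : Fin s, fun ω => c i * η i ω) = fun ω => ∑ i, c i * η i ω :=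
    funext fun ω => by simp
  rwa [he] at h

theorem baseline_noise_variance_reduction {Ω : Type*} [MeasurableSpace Ω]
    (μ : Measure Ω) [IsProbabilityMeasure μ]
    (s : ℕ) (hs : 1 ≤ s) (a En : Fin s → ℝ) (σ : ℝ)
    (η : Fin s → Ω → ℝ)
    (hindep : iIndepFun η μ)
    (hL2 : ∀ i, MemLp (η i) 2 μ)
    (hmean : ∀ i, ∫ ω, η i ω ∂μ = 0)
    (hvar : ∀ i, variance (η i) μ = σ ^ 2) :
    variance (fun ω => ∑ i, a i * (En i * (1 + η i ω))) μ
      - variance (fun ω => ∑ i, a i *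
          (En i * (1 + η i ω) - (s : ℝ)⁻¹ * ∑ j, En j * (1 + η j ω))) μ
      = (σ ^ 2 / s) * (∑ i, a i)
          * (∑ j, a j * (2 * (En j) ^ 2 - (s : ℝ)⁻¹ * ∑ k, (En k) ^ 2)) := by
  set A := ∑ i, a i with hA
  clear_value A
  have key : ∀ (c : Fin s → ℝ),
      variance (fun ω => ∑ i, c i * η i ω) μ = σ ^ 2 * ∑ i, (c i) ^ 2 :=
    fun c => variance_linear_comb μ s c σ η hindep hL2 hvar
  -- first variance
  have e1 : (fun ω => ∑ i, a i * (En i * (1 + η i ω)))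
      = fun ω => (∑ i, a i * En i) + ∑ i, (a i * En i) * η i ω := by
    funext ω
    rw [← Finset.sum_add_distrib]
    exact Finset.sum_congr rfl fun i _ => by ring
  have v1 : variance (fun ω => ∑ i, a i * (En i * (1 + η i ω))) μ
      = σ ^ 2 * ∑ i, (a i * En i) ^ 2 := by
    rw [e1]
    exact (variance_const_add' μ _ _ (memLp_lin_comb μ s _ η hL2)).trans (key _)
  -- second variance
  have e2 : (fun ω => ∑ i, a i *
          (En i * (1 + η i ω) - (s : ℝ)⁻¹ * ∑ j, En j * (1 + η j ω)))
      = fun ω => ((∑ i, a i * En i) - A * (s : ℝ)⁻¹ * ∑ j, En j)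
          + ∑ i, (a i * En i - A * (s : ℝ)⁻¹ * En i) * η i ω := by
    funext ω
    have expand : ∀ (b : Fin s → ℝ), ∑ j, b j * (1 + η j ω)
        = (∑ j, b j) + ∑ j, b j * η j ω := by
      intro b
      rw [← Finset.sum_add_distrib]
      exact Finset.sum_congr rfl fun j _ => by ring
    have h1 : ∑ i, a i * (En i * (1 + η i ω) - (s : ℝ)⁻¹ * ∑ j, En j * (1 + η j ω))
        = (∑ i, (a i * En i) * (1 + η i ω))
          - A * ((s : ℝ)⁻¹ * ∑ j, En j * (1 + η j ω)) := by
      rw [hA, Finset.sum_mul, ← Finset.sum_sub_distrib]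
      exact Finset.sum_congr rfl fun i _ => by ring
    have h3 : ∑ i, (a i * En i - A * (s : ℝ)⁻¹ * En i) * η i ω
        = (∑ i, (a i * En i) * η i ω) - A * (s : ℝ)⁻¹ * ∑ i, En i * η i ω := by
      rw [Finset.mul_sum, ← Finset.sum_sub_distrib]
      exact Finset.sum_congr rfl fun i _ => by ring
    rw [h1, expand (fun i => a i * En i), expand En, h3]
    ring
  have v2 : variance (fun ω => ∑ i, a i *
          (En i * (1 + η i ω) - (s : ℝ)⁻¹ * ∑ j, En j * (1 + η j ω))) μ
      = σ ^ 2 * ∑ i, (a i * En i - A * (s : ℝ)⁻¹ * En i) ^ 2 := by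
    rw [e2]
    exact (variance_const_add' μ _ _ (memLp_lin_comb μ s _ η hL2)).trans (key _)
  rw [v1, v2]
  have hsum : ∑ i, (a i * En i) ^ 2 - ∑ i, (a i * En i - A * (s : ℝ)⁻¹ * En i) ^ 2
      = (2 * A * (s : ℝ)⁻¹) * (∑ i, a i * (En i) ^ 2)
        - (A ^ 2 * (s : ℝ)⁻¹ ^ 2) * ∑ i, (En i) ^ 2 := by
    rw [Finset.mul_sum, Finset.mul_sum, ← Finset.sum_sub_distrib, ← Finset.sum_sub_distrib]
    exact Finset.sum_congr rfl fun i _ => by ring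
  have hrhs : ∑ j, a j * (2 * (En j) ^ 2 - (s : ℝ)⁻¹ * ∑ k, (En k) ^ 2)
      = 2 * (∑ j, a j * (En j) ^ 2) - A * ((s : ℝ)⁻¹ * ∑ k, (En k) ^ 2) := by
    rw [hA, Finset.sum_mul, Finset.mul_sum, Finset.mul_sum, ← Finset.sum_sub_distrib]
    exact Finset.sum_congr rfl fun j _ => by ring
  rw [hrhs]
  linear_combination σ ^ 2 * hsum
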